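/- (Proposition 1, membership part) With the above polar decomposition data, the partial isometry S belongs to the norm-closure of the unital star-subalgebra of bounded operators on H generated by a; in particular S lies in the C*-algebra generated by a and a^*. -/

import Mathlib

open StarAlgebra in
lemma cfc_mem_elemental_aux {A : Type*} [CStarAlgebra A] (x : A) (f : ℝ → ℝ)
    (hx : IsSelfAdjoint x) : cfc f x ∈ StarAlgebra.elemental ℂ x := by
  rw [cfc_real_eq_complex f hx]
  apply cfc_cases (· ∈ StarAlgebra.elemental ℂ x) x _ (zero_mem _)
  intro hfc hsn
  have : IsStarNormal x := hsn
  rw [cfcHom_eq_of_isStarNormal]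
  exact SetLike.coe_mem _


set_option synthInstance.maxHeartbeats 1000000 in
set_option maxHeartbeats 2000000 in
/-- **Proposition 1, membership part.** With the polar decomposition data
`a* = S* C`, `C = (a a*)^{1/2}`, `ker S* = ker a*`, for `a` satisfying `a* a = 1 + q a a*`
with `q ∈ (-1,1)`, the partial isometry `S` belongs to the norm-closure of the unital
star-subalgebra of bounded operators generated by `a`; in particular `S` lies in the
C*-algebra generated by `a` and `a*`. -/
theorem polar_partialIsometry_mem_closure {H : Type*} [NormedAddCommGroup H]
    [InnerProductSpace ℂ H] [CompleteSpace H]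
    {q : ℝ} (hq₁ : -1 < q) (hq₂ : q < 1) (a S : H →L[ℂ] H)
    (hccr : star a * a = 1 + q • (a * star a))
    (hSpi : S * star S * S = S)
    (hpolar : star a = star S * CFC.sqrt (a * star a))
    (hker : LinearMap.ker ((star S : H →L[ℂ] H) : H →ₗ[ℂ] H) = LinearMap.ker ((star a : H →L[ℂ] H) : H →ₗ[ℂ] H)) :
    S ∈ (StarAlgebra.adjoin ℂ ({a} : Set (H →L[ℂ] H))).topologicalClosure := by
  by_cases htriv : Subsingleton (H →L[ℂ] H)
  · have : S = 0 := Subsingleton.elim _ _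
    rw [this]; exact zero_mem _
  have : Nontrivial (H →L[ℂ] H) := not_subsingleton_iff_nontrivial.mp htriv
  set A := a * star a with hA
  have hA_sa : IsSelfAdjoint A := IsSelfAdjoint.mul_star_self a
  have hA_nn : (0 : H →L[ℂ] H) ≤ A := mul_star_self_nonneg a
  have hspec_nn : ∀ t ∈ spectrum ℝ A, 0 ≤ t := fun t ht =>
    spectrum_nonneg_of_nonneg hA_nn ht
  set δ : ℝ := min 1 (1 + q) with hδdef
  have hδpos : 0 < δ := lt_min one_pos (by linarith)
  -- one-step spectral relation
  have hstep : ∀ t ∈ spectrum ℝ A, t ≠ 0 →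
      t = 1 ∨ ∃ s ∈ spectrum ℝ A, 0 ≤ s ∧ t = 1 + q * s := by
    intro t ht ht0
    have h1 : t ∈ spectrum ℝ (star a * a) := by
      have := spectrum.nonzero_mul_comm (𝕜 := ℝ) a (star a)
      have : t ∈ spectrum ℝ (star a * a) \ {0} := by
        rw [← this]; exact ⟨ht, ht0⟩
      exact this.1
    rw [hccr] at h1
    rcases eq_or_ne q 0 with hq0 | hq0
    · left
      rw [hq0, zero_smul, add_zero, spectrum.one_eq] at h1
      exact h1
    · right
      have h1' : t ∈ spectrum ℝ (algebraMap ℝ (H →L[ℂ] H) 1 + q • A) := by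
        rwa [map_one]
      have h2 : t - 1 ∈ spectrum ℝ (q • A) := by
        have := (spectrum.add_mem_add_iff (a := q • A) (r := t - 1) (s := 1)).mp
        rw [sub_add_cancel] at this
        exact this h1'
      have h3 : (Units.mk0 q hq0 : ℝ) • ((t - 1) / q) ∈ spectrum ℝ ((Units.mk0 q hq0 : ℝ) • A) := by
        simpa [Units.smul_def, smul_eq_mul, mul_div_cancel₀ _ hq0] using h2
      have h4 : (t - 1) / q ∈ spectrum ℝ A := spectrum.smul_mem_smul_iff.mp h3
      exact ⟨(t - 1) / q, h4, hspec_nn _ h4, by field_simp; ring⟩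
  -- spectral gap
  have hgap : ∀ t ∈ spectrum ℝ A, t ≠ 0 → δ ≤ t := by
    intro t ht ht0
    rcases hstep t ht ht0 with h1 | ⟨s, hs, hs0, hts⟩
    · rw [h1]; exact min_le_left _ _
    rcases le_or_gt 0 q with hq | hq
    · have : (1:ℝ) ≤ t := by nlinarith
      exact le_trans (min_le_left _ _) this
    · rcases eq_or_ne s 0 with hs0' | hs0'
      · rw [hts, hs0', mul_zero, add_zero]; exact min_le_left _ _
      · have hs1 : s ≤ 1 := by
          rcases hstep s hs hs0' with h2 | ⟨r, hr, hr0, hsr⟩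
          · exact h2.le
          · nlinarith
        have : 1 + q ≤ t := by nlinarith
        exact le_trans (min_le_right _ _) this

  -- functions
  set f : ℝ → ℝ := fun t => t / max t δ with hfdef
  set m : ℝ → ℝ := fun t => Real.sqrt t / max t δ with hmdef
  have hmaxne : ∀ x : ℝ, max x δ ≠ 0 := fun x =>
    ne_of_gt (lt_of_lt_of_le hδpos (le_max_right _ _))
  have hfc : Continuous f := continuous_id.div (continuous_id.max continuous_const) hmaxne
  have hmc : Continuous m := Real.continuous_sqrt.div (continuous_id.max continuous_const) hmaxne
  -- CFC.sqrt A = cfc Real.sqrt A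
  have hsqrt_nn : (0 : H →L[ℂ] H) ≤ cfc Real.sqrt A :=
    cfc_nonneg fun x _ => Real.sqrt_nonneg x
  have hC : CFC.sqrt A = cfc Real.sqrt A := by
    refine CFC.sqrt_unique ?_ hsqrt_nn
    rw [← cfc_mul Real.sqrt Real.sqrt A Real.continuous_sqrt.continuousOn
      Real.continuous_sqrt.continuousOn]
    calc cfc (fun t => Real.sqrt t * Real.sqrt t) A
        = cfc (id : ℝ → ℝ) A := by
          apply cfc_congr
          intro t ht
          exact Real.mul_self_sqrt (hspec_nn t ht)
      _ = A := cfc_id ℝ A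
  set e := cfc f A with hedef
  have he_sa : IsSelfAdjoint e := cfc_predicate f A
  have hCe : cfc Real.sqrt A * e = cfc Real.sqrt A := by
    rw [hedef, ← cfc_mul Real.sqrt f A Real.continuous_sqrt.continuousOn hfc.continuousOn]
    apply cfc_congr
    intro t ht
    rcases eq_or_ne t 0 with h0 | h0
    · simp [h0]
    · have hge := hgap t ht h0
      have hmax : max t δ = t := max_eq_left hge
      have htne : t ≠ 0 := h0
      simp only [hfdef, hmax, div_self htne, mul_one]
  have hmC : cfc m A * cfc Real.sqrt A = e := by
    rw [hedef, ← cfc_mul m Real.sqrt A hmc.continuousOn Real.continuous_sqrt.continuousOn]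
    apply cfc_congr
    intro t ht
    have ht0 := hspec_nn t ht
    simp only [hmdef, hfdef]
    rw [div_mul_eq_mul_div, Real.mul_self_sqrt ht0]
  have hCsa : star (CFC.sqrt A) = CFC.sqrt A :=
    (IsSelfAdjoint.of_nonneg (CFC.sqrt_nonneg _)).star_eq
  have haCS : a = cfc Real.sqrt A * S := by
    conv_lhs => rw [← star_star a, hpolar]
    rw [star_mul, star_star, hCsa, hC]
  have hstar_a_e : star a * (1 - e) = 0 := by
    have h0 : cfc Real.sqrt A * (1 - e) = 0 := by
      rw [mul_sub, mul_one, hCe, sub_self]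
    rw [hpolar, hC, mul_assoc, h0, mul_zero]
  have hSe : star S * (1 - e) = 0 := by
    ext x
    have hx : (1 - e) x ∈ LinearMap.ker ((star a : H →L[ℂ] H) : H →ₗ[ℂ] H) := by
      rw [LinearMap.mem_ker]
      have := ContinuousLinearMap.ext_iff.mp hstar_a_e x
      simpa [ContinuousLinearMap.mul_apply] using this
    rw [← hker] at hx
    have := LinearMap.mem_ker.mp hx
    simpa [ContinuousLinearMap.mul_apply] using this
  have heS : e * S = S := by
    have h1 := congrArg star hSe
    rw [star_mul, star_zero, star_sub, star_one, he_sa.star_eq, star_star] at h1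
    have h2 : (1 - e) * S = S - e * S := by rw [sub_mul, one_mul]
    have h3 : S - e * S = 0 := by rw [← h2]; exact h1
    exact (sub_eq_zero.mp h3).symm
  have hSm : S = cfc m A * a := by
    rw [haCS, ← mul_assoc, hmC, heS]
  -- membership
  have ha_mem : a ∈ (StarAlgebra.adjoin ℂ ({a} : Set (H →L[ℂ] H))).topologicalClosure :=
    (StarAlgebra.adjoin ℂ ({a} : Set (H →L[ℂ] H))).le_topologicalClosure
      (StarAlgebra.self_mem_adjoin_singleton ℂ a)
  have hA_mem : A ∈ (StarAlgebra.adjoin ℂ ({a} : Set (H →L[ℂ] H))).topologicalClosure := by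
    apply (StarAlgebra.adjoin ℂ ({a} : Set (H →L[ℂ] H))).le_topologicalClosure
    exact mul_mem (StarAlgebra.self_mem_adjoin_singleton ℂ a)
      (star_mem (StarAlgebra.self_mem_adjoin_singleton ℂ a))
  have hcm : cfc m A ∈ (StarAlgebra.adjoin ℂ ({a} : Set (H →L[ℂ] H))).topologicalClosure :=
    StarAlgebra.elemental.le_of_mem
      (StarSubalgebra.isClosed_topologicalClosure _) hA_mem (cfc_mem_elemental_aux A m hA_sa)
  rw [hSm]
  exact mul_mem hcm ha_mem
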